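/- The exact formula for the log-determinant of the Laplacian on the round sphere, log det'Δ_{L^k} = 2 Σ_{j=1}^{k} (k-j) log(j+1) - (k+1) log((k+1)!) - 4ζ'(-1) + (k+1)^2/2, has the large-k asymptotics log det'Δ_{L^k} = -(k/2) log(k/(2π)) - (2/3) log k + O(1). -/

import Mathlib

open Filter

/-- The exact spectral determinant on the round sphere:
`log det'Δ_{L^k} = 2 Σ_{j=1}^{k} (k-j) log(j+1) - (k+1) log((k+1)!) - 4ζ'(-1) + (k+1)²/2`. -/
noncomputable def sphereLogDet (k : ℕ) : ℝ :=
  2 * ∑ j ∈ Finset.Icc 1 k, ((k : ℝ) - j) * Real.log (j + 1)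
    - ((k : ℝ) + 1) * Real.log (Nat.factorial (k + 1))
    - 4 * (deriv riemannZeta (-1)).re
    + ((k : ℝ) + 1) ^ 2 / 2

section Aux

open Finset Topology

noncomputable def gfun (x : ℝ) : ℝ := (x^2/2 + x/2 + 1/12) * Real.log x - x^2/4
noncomputable def hfun (x : ℝ) : ℝ := x * Real.log x - x + Real.log x / 2 + 1/(12*x)
noncomputable def Tsum (n : ℕ) : ℝ := ∑ m ∈ Finset.Icc 1 n, (m:ℝ) * Real.log m
noncomputable def aseq (n : ℕ) : ℝ := Tsum n - gfun n
noncomputable def bseq (n : ℕ) : ℝ := Real.log (Nat.factorial n) - hfun n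

lemma log_taylor (n : ℕ) (hn : 2 ≤ n) :
    |Real.log (1 + 1/(n:ℝ)) - (12*(n:ℝ)^3 - 6*n^2 + 4*n - 3)/(12*(n:ℝ)^4)| ≤ 2/(n:ℝ)^5 := by
  have hn2 : (2:ℝ) ≤ (n:ℝ) := by exact_mod_cast hn
  have hnpos : (0:ℝ) < n := by linarith
  have hx : |(-(1/(n:ℝ)))| < 1 := by
    rw [abs_neg, abs_of_pos (by positivity), div_lt_one hnpos]; linarith
  have key := Real.abs_log_sub_add_sum_range_le hx 4
  have hsum : (∑ i ∈ Finset.range 4, (-(1/(n:ℝ))) ^ (i+1) / (i+1)) =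
      -((12*(n:ℝ)^3 - 6*n^2 + 4*n - 3)/(12*(n:ℝ)^4)) := by
    simp [Finset.sum_range_succ]
    field_simp
    ring
  have h1 : (1:ℝ) - (-(1/(n:ℝ))) = 1 + 1/n := by ring
  have habs : |(-(1/(n:ℝ)))| = 1/n := by
    rw [abs_neg, abs_of_pos (by positivity)]
  rw [hsum, h1, habs, neg_add_eq_sub] at key
  have hd : (1:ℝ)/2 ≤ 1 - 1/n := by
    have : (1:ℝ)/n ≤ 1/2 := by
      rw [div_le_div_iff₀ hnpos (by norm_num)]; linarith
    linarith
  have h2 : (1/(n:ℝ))^(4+1) / (1 - 1/n) ≤ 2/(n:ℝ)^5 := by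
    have h5 : (1/(n:ℝ))^(4+1) = 1/(n:ℝ)^5 := by norm_num
    rw [h5]
    calc (1:ℝ)/(n:ℝ)^5 / (1 - 1/n) ≤ (1/(n:ℝ)^5) / (1/2) :=
          div_le_div_of_nonneg_left (by positivity) (by norm_num) hd
      _ = 2/(n:ℝ)^5 := by ring
  exact key.trans h2

lemma aseq_diff (n : ℕ) (hn : 1 ≤ n) :
    aseq (n+1) - aseq n
      = (2*(n:ℝ)+1)/4 - (((n:ℝ)^2+(n:ℝ))/2 + 1/12) * Real.log (1+1/(n:ℝ)) := by
  have hnpos : (0:ℝ) < n := by exact_mod_cast hn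
  have hTs : Tsum (n+1) = Tsum n + ((n:ℝ)+1) * Real.log ((n:ℝ)+1) := by
    unfold Tsum
    rw [Finset.sum_Icc_succ_top (by omega : 1 ≤ n+1)]
    push_cast; ring
  have hlog : Real.log ((n:ℝ)+1) = Real.log n + Real.log (1+1/n) := by
    rw [← Real.log_mul (ne_of_gt hnpos) (by positivity)]
    congr 1; field_simp
  unfold aseq gfun
  rw [hTs]
  push_cast
  rw [hlog]
  field_simp
  ring

lemma bseq_diff (n : ℕ) (hn : 1 ≤ n) :
    bseq (n+1) - bseq n
      = 1 + 1/(12*(n:ℝ)*((n:ℝ)+1)) - ((n:ℝ)+1/2) * Real.log (1+1/(n:ℝ)) := by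
  have hnpos : (0:ℝ) < n := by exact_mod_cast hn
  have hF : Real.log (Nat.factorial (n+1)) = Real.log (Nat.factorial n) + Real.log ((n:ℝ)+1) := by
    rw [Nat.factorial_succ]
    push_cast
    rw [Real.log_mul (by positivity) (by exact_mod_cast Nat.cast_ne_zero.mpr (Nat.factorial_ne_zero n))]
    ring
  have hlog : Real.log ((n:ℝ)+1) = Real.log n + Real.log (1+1/n) := by
    rw [← Real.log_mul (ne_of_gt hnpos) (by positivity)]
    congr 1; field_simp
  unfold bseq hfun
  rw [hF]
  push_cast
  rw [hlog]
  field_simp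
  ring

lemma aseq_diff_bound (n : ℕ) (hn : 2 ≤ n) :
    |aseq (n+1) - aseq n| ≤ 3/(n:ℝ)^3 := by
  have h1 := log_taylor n hn
  have hn2 : (2:ℝ) ≤ (n:ℝ) := by exact_mod_cast hn
  have hnpos : (0:ℝ) < n := by linarith
  rw [aseq_diff n (by omega)]
  set L := Real.log (1 + 1/(n:ℝ)) with hL
  set S := (12*(n:ℝ)^3 - 6*n^2 + 4*n - 3)/(12*(n:ℝ)^4) with hS
  have hA : (0:ℝ) ≤ ((n:ℝ)^2+(n:ℝ))/2 + 1/12 := by positivity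
  have heq : (2*(n:ℝ)+1)/4 - (((n:ℝ)^2+(n:ℝ))/2 + 1/12) * L
      = (14*(n:ℝ)+3)/(144*(n:ℝ)^4) + (((n:ℝ)^2+(n:ℝ))/2 + 1/12) * (S - L) := by
    rw [hS]; field_simp; ring
  rw [heq]
  have h2 : |(((n:ℝ)^2+(n:ℝ))/2 + 1/12) * (S - L)| ≤ (((n:ℝ)^2+(n:ℝ))/2 + 1/12) * (2/(n:ℝ)^5) := by
    rw [abs_mul, abs_of_nonneg hA]
    exact mul_le_mul_of_nonneg_left (by rw [abs_sub_comm]; exact h1) hA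
  have h3 : (14*(n:ℝ)+3)/(144*(n:ℝ)^4) + (((n:ℝ)^2+(n:ℝ))/2 + 1/12) * (2/(n:ℝ)^5)
      ≤ 3/(n:ℝ)^3 := by
    have hcomb : (14*(n:ℝ)+3)/(144*(n:ℝ)^4) + (((n:ℝ)^2+(n:ℝ))/2 + 1/12) * (2/(n:ℝ)^5)
        = (158*(n:ℝ)^2 + 147*(n:ℝ) + 24)/(144*(n:ℝ)^5) := by
      field_simp; ring
    rw [hcomb, div_le_div_iff₀ (by positivity) (by positivity)]
    nlinarith [sq_nonneg ((n:ℝ)-1), pow_pos hnpos 3, pow_pos hnpos 2]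
  calc |(14*(n:ℝ)+3)/(144*(n:ℝ)^4) + (((n:ℝ)^2+(n:ℝ))/2 + 1/12) * (S - L)|
      ≤ (14*(n:ℝ)+3)/(144*(n:ℝ)^4) + (((n:ℝ)^2+(n:ℝ))/2 + 1/12) * (2/(n:ℝ)^5) := by
        refine (abs_add_le _ _).trans ?_
        exact add_le_add (le_of_eq (abs_of_nonneg (by positivity))) h2
    _ ≤ 3/(n:ℝ)^3 := h3

lemma bseq_diff_bound (n : ℕ) (hn : 2 ≤ n) :
    |bseq (n+1) - bseq n| ≤ 3/(n:ℝ)^3 := by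
  have h1 := log_taylor n hn
  have hn2 : (2:ℝ) ≤ (n:ℝ) := by exact_mod_cast hn
  have hnpos : (0:ℝ) < n := by linarith
  rw [bseq_diff n (by omega)]
  set L := Real.log (1 + 1/(n:ℝ)) with hL
  set S := (12*(n:ℝ)^3 - 6*n^2 + 4*n - 3)/(12*(n:ℝ)^4) with hS
  have hA : (0:ℝ) ≤ (n:ℝ)+1/2 := by positivity
  have heq : 1 + 1/(12*(n:ℝ)*((n:ℝ)+1)) - ((n:ℝ)+1/2) * L
      = (5*(n:ℝ)+3)/(24*(n:ℝ)^4*((n:ℝ)+1)) + ((n:ℝ)+1/2) * (S - L) := by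
    rw [hS]; field_simp; ring
  rw [heq]
  have h3 : (5*(n:ℝ)+3)/(24*(n:ℝ)^4*((n:ℝ)+1)) + ((n:ℝ)+1/2) * (2/(n:ℝ)^5)
      ≤ 3/(n:ℝ)^3 := by
    have hcomb : (5*(n:ℝ)+3)/(24*(n:ℝ)^4*((n:ℝ)+1)) + ((n:ℝ)+1/2) * (2/(n:ℝ)^5)
        = (53*(n:ℝ)^2 + 75*(n:ℝ) + 24)/(24*(n:ℝ)^5*((n:ℝ)+1)) := by
      field_simp; ring
    rw [hcomb, div_le_div_iff₀ (by positivity) (by positivity)]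
    nlinarith [mul_le_mul_of_nonneg_left hn2 (pow_nonneg hnpos.le 5),
      mul_le_mul_of_nonneg_left hn2 (pow_nonneg hnpos.le 4),
      mul_le_mul_of_nonneg_left hn2 (pow_nonneg hnpos.le 3),
      pow_pos hnpos 3, pow_pos hnpos 4, pow_pos hnpos 5]
  calc |(5*(n:ℝ)+3)/(24*(n:ℝ)^4*((n:ℝ)+1)) + ((n:ℝ)+1/2) * (S - L)|
      ≤ (5*(n:ℝ)+3)/(24*(n:ℝ)^4*((n:ℝ)+1)) + ((n:ℝ)+1/2) * (2/(n:ℝ)^5) := by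
        refine (abs_add_le _ _).trans ?_
        refine add_le_add (le_of_eq (abs_of_nonneg (by positivity))) ?_
        rw [abs_mul, abs_of_nonneg hA]
        exact mul_le_mul_of_nonneg_left (by rw [abs_sub_comm]; exact h1) hA
    _ ≤ 3/(n:ℝ)^3 := h3

lemma step_ineq (N : ℕ) (hN : 2 ≤ N) :
    3/(N:ℝ)^3 ≤ 3/((N:ℝ)-1)^2 - 3/(N:ℝ)^2 := by
  have hN2 : (2:ℝ) ≤ (N:ℝ) := by exact_mod_cast hN
  have h1 : (0:ℝ) < (N:ℝ) - 1 := by linarith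
  have h0 : (0:ℝ) < N := by linarith
  rw [div_sub_div _ _ (by positivity) (by positivity),
    div_le_div_iff₀ (by positivity) (by positivity)]
  ring_nf
  nlinarith [pow_pos h0 3, pow_pos h0 2, pow_pos h1 2, sq_nonneg ((N:ℝ)-1)]

lemma tele_bound (f : ℕ → ℝ) (hf : ∀ m, 2 ≤ m → |f (m+1) - f m| ≤ 3/(m:ℝ)^3)
    (n : ℕ) (hn : 2 ≤ n) :
    ∀ N, n ≤ N → |f N - f n| ≤ 3/((n:ℝ)-1)^2 - 3/((N:ℝ)-1)^2 := by
  intro N hN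
  induction N, hN using Nat.le_induction with
  | base => simp
  | succ N hN ih =>
    have hN2 : 2 ≤ N := le_trans hn hN
    have key := hf N hN2
    have h2 := step_ineq N hN2
    have htri : |f (N+1) - f n| ≤ |f N - f n| + |f (N+1) - f N| := by
      have := abs_add_le (f N - f n) (f (N+1) - f N)
      simpa [sub_add_sub_cancel'] using this
    push_cast
    calc |f (N+1) - f n| ≤ |f N - f n| + |f (N+1) - f N| := htri
      _ ≤ (3/((n:ℝ)-1)^2 - 3/((N:ℝ)-1)^2) + 3/(N:ℝ)^3 := add_le_add ih key
      _ ≤ 3/((n:ℝ)-1)^2 - 3/((N:ℝ)+1-1)^2 := by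
          have : (N:ℝ)+1-1 = (N:ℝ) := by ring
          rw [this]; linarith

lemma aseq_bound (n : ℕ) (hn : 2 ≤ n) : |aseq n| ≤ |aseq 2| + 3 := by
  have h := tele_bound aseq aseq_diff_bound 2 le_rfl n hn
  have hnn : (0:ℝ) ≤ 3/((n:ℝ)-1)^2 := by positivity
  have : |aseq n - aseq 2| ≤ 3 := by
    norm_num at h
    linarith
  calc |aseq n| = |aseq 2 + (aseq n - aseq 2)| := by ring_nf
    _ ≤ |aseq 2| + |aseq n - aseq 2| := abs_add_le _ _
    _ ≤ |aseq 2| + 3 := by linarith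

lemma log_fact_range (n : ℕ) :
    Real.log (Nat.factorial n) = ∑ i ∈ Finset.range n, Real.log ((i:ℝ)+1) := by
  induction n with
  | zero => simp
  | succ n ih =>
    rw [Finset.sum_range_succ, ← ih, Nat.factorial_succ]
    push_cast
    rw [Real.log_mul (by positivity)
      (by exact_mod_cast Nat.cast_ne_zero.mpr (Nat.factorial_ne_zero n))]
    ring

lemma Tsum_range (n : ℕ) :
    Tsum n = ∑ i ∈ Finset.range n, ((i:ℝ)+1) * Real.log ((i:ℝ)+1) := by
  unfold Tsum
  rw [← Finset.Ico_add_one_right_eq_Icc, Finset.sum_Ico_eq_sum_range]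
  apply Finset.sum_congr rfl
  intro i _
  push_cast
  ring_nf

lemma sum_rewrite (k : ℕ) :
    ∑ j ∈ Finset.Icc 1 k, ((k:ℝ) - j) * Real.log ((j:ℝ)+1)
      = ((k:ℝ)+1) * Real.log (Nat.factorial (k+1)) - Tsum (k+1) := by
  have lhs_eq : ∑ j ∈ Finset.Icc 1 k, ((k:ℝ) - j) * Real.log ((j:ℝ)+1)
      = ∑ i ∈ Finset.range (k+1), (((k:ℝ)+1) - ((i:ℝ)+1)) * Real.log ((i:ℝ)+1) := by
    rw [Finset.sum_range_succ' (fun i => (((k:ℝ)+1) - ((i:ℝ)+1)) * Real.log ((i:ℝ)+1)) k]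
    simp only [Nat.cast_zero, zero_add, Real.log_one, mul_zero, add_zero]
    rw [← Finset.Ico_add_one_right_eq_Icc, Finset.sum_Ico_eq_sum_range]
    apply Finset.sum_congr rfl
    intro i _
    push_cast
    ring_nf
  rw [lhs_eq, log_fact_range, Tsum_range, Finset.mul_sum, ← Finset.sum_sub_distrib]
  apply Finset.sum_congr rfl
  intro i _
  ring

lemma bseq_eq (n : ℕ) (hn : 1 ≤ n) :
    bseq n = Real.log (Stirling.stirlingSeq n) + Real.log 2 / 2 - 1/(12*(n:ℝ)) := by
  have hnpos : (0:ℝ) < n := by exact_mod_cast hn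
  have hf := Stirling.log_stirlingSeq_formula n
  unfold bseq hfun
  rw [hf, Real.log_mul (by norm_num) (ne_of_gt hnpos),
    Real.log_div (ne_of_gt hnpos) (Real.exp_ne_zero 1), Real.log_exp]
  ring

lemma tendsto_bseq :
    Tendsto bseq atTop (𝓝 (Real.log (2*Real.pi)/2)) := by
  have h1 : Tendsto (fun n : ℕ => Real.log (Stirling.stirlingSeq n)) atTop
      (𝓝 (Real.log Real.pi / 2)) := by
    have := (Stirling.tendsto_stirlingSeq_sqrt_pi).log
      (ne_of_gt (Real.sqrt_pos.mpr Real.pi_pos))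
    rwa [Real.log_sqrt Real.pi_pos.le] at this
  have h2 : Tendsto (fun n : ℕ => 1/(12*(n:ℝ))) atTop (𝓝 0) := by
    have := tendsto_one_div_atTop_nhds_zero_nat (𝕜 := ℝ)
    have h3 : Tendsto (fun n : ℕ => (1/12) * (1/(n:ℝ))) atTop (𝓝 ((1/12) * 0)) :=
      this.const_mul _
    simp only [mul_zero] at h3
    refine h3.congr fun n => ?_
    field_simp
  have h : Tendsto (fun n : ℕ => Real.log (Stirling.stirlingSeq n) + Real.log 2 / 2
      - 1/(12*(n:ℝ))) atTop (𝓝 (Real.log Real.pi / 2 + Real.log 2 / 2 - 0)) :=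
    (h1.add_const _).sub h2
  have hval : Real.log Real.pi / 2 + Real.log 2 / 2 - 0 = Real.log (2*Real.pi)/2 := by
    rw [Real.log_mul (by norm_num) (ne_of_gt Real.pi_pos)]
    ring
  rw [hval] at h
  refine h.congr' ?_
  filter_upwards [eventually_ge_atTop 1] with n hn
  exact (bseq_eq n hn).symm

lemma bseq_close (n : ℕ) (hn : 2 ≤ n) :
    |bseq n - Real.log (2*Real.pi)/2| ≤ 3/((n:ℝ)-1)^2 := by
  have key := tele_bound bseq bseq_diff_bound n hn
  have hlim : Tendsto (fun N => |bseq N - bseq n|) atTop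
      (𝓝 |Real.log (2*Real.pi)/2 - bseq n|) :=
    (tendsto_bseq.sub_const _).abs
  have hle : |Real.log (2*Real.pi)/2 - bseq n| ≤ 3/((n:ℝ)-1)^2 := by
    refine le_of_tendsto hlim ?_
    filter_upwards [eventually_ge_atTop n] with N hN
    have := key N hN
    have hnn : (0:ℝ) ≤ 3/((N:ℝ)-1)^2 := by positivity
    linarith
  rwa [abs_sub_comm]
  
end Aux

lemma main_identity (k : ℕ) (hk : 1 ≤ k) :
    sphereLogDet k + (k : ℝ) / 2 * Real.log ((k : ℝ) / (2 * Real.pi))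
        + 2 / 3 * Real.log (k : ℝ)
      = -((k:ℝ)/2 + 2/3) * Real.log (1 + 1/(k:ℝ))
        + ((k:ℝ)+1) * (bseq (k+1) - Real.log (2*Real.pi)/2)
        - 2 * aseq (k+1)
        + (Real.log (2*Real.pi)/2 + 1/12 - 4 * (deriv riemannZeta (-1)).re) := by
  have hkpos : (0:ℝ) < k := by exact_mod_cast hk
  have h2pi : (0:ℝ) < 2 * Real.pi := by positivity
  have hT : Tsum (k+1) = aseq (k+1) + gfun ((k:ℝ)+1) := by
    unfold aseq; push_cast; ring
  have hLfac : Real.log (Nat.factorial (k+1)) = bseq (k+1) + hfun ((k:ℝ)+1) := by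
    unfold bseq; push_cast; ring
  have hlog1 : Real.log ((k:ℝ)+1) = Real.log k + Real.log (1+1/k) := by
    rw [← Real.log_mul (ne_of_gt hkpos) (by positivity)]
    congr 1; field_simp
  have hlog2 : Real.log ((k:ℝ) / (2*Real.pi)) = Real.log k - Real.log (2*Real.pi) := by
    rw [Real.log_div (ne_of_gt hkpos) (ne_of_gt h2pi)]
  unfold sphereLogDet
  rw [sum_rewrite k, hT, hLfac]
  unfold gfun hfun
  rw [hlog1, hlog2]
  have hk1 : ((k:ℝ)+1) ≠ 0 := by positivity
  field_simp
  ring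

/-- Large-`k` asymptotics of the sphere log-determinant:
`log det'Δ_{L^k} = -(k/2) log(k/(2π)) - (2/3) log k + O(1)` as `k → ∞`. -/
theorem sphereLogDet_asymptotics :
    (fun k : ℕ => sphereLogDet k + (k : ℝ) / 2 * Real.log ((k : ℝ) / (2 * Real.pi))
        + 2 / 3 * Real.log (k : ℝ))
      =O[atTop] (fun _ => (1 : ℝ)) := by
  rw [Asymptotics.isBigO_iff]
  refine ⟨1/2 + 2/3 + 6 + 2*(|aseq 2| + 3)
    + |Real.log (2*Real.pi)/2 + 1/12 - 4 * (deriv riemannZeta (-1)).re|, ?_⟩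
  filter_upwards [eventually_ge_atTop 2] with k hk
  have hk1 : 1 ≤ k := by omega
  have hkpos : (0:ℝ) < k := by exact_mod_cast (by omega : 0 < k)
  have hkr : (2:ℝ) ≤ (k:ℝ) := by exact_mod_cast hk
  rw [main_identity k hk1]
  -- bound each term
  have hlam0 : 0 ≤ Real.log (1 + 1/(k:ℝ)) := Real.log_nonneg (by
    have : (0:ℝ) ≤ 1/(k:ℝ) := by positivity
    linarith)
  have hlam1 : Real.log (1 + 1/(k:ℝ)) ≤ 1/(k:ℝ) := by
    have := Real.log_le_sub_one_of_pos (show (0:ℝ) < 1 + 1/(k:ℝ) by positivity)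
    linarith
  have hb1 : |(-((k:ℝ)/2 + 2/3)) * Real.log (1 + 1/(k:ℝ))| ≤ 1/2 + 2/3 := by
    rw [abs_mul, abs_neg, abs_of_nonneg (by positivity : (0:ℝ) ≤ (k:ℝ)/2 + 2/3),
      abs_of_nonneg hlam0]
    calc ((k:ℝ)/2 + 2/3) * Real.log (1 + 1/(k:ℝ)) ≤ ((k:ℝ)/2 + 2/3) * (1/k) :=
          mul_le_mul_of_nonneg_left hlam1 (by positivity)
      _ = 1/2 + (2/3) * (1/k) := by field_simp
      _ ≤ 1/2 + 2/3 := by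
          have : (1:ℝ)/k ≤ 1 := by
            rw [div_le_one hkpos]; linarith
          nlinarith
  have hb2 : |((k:ℝ)+1) * (bseq (k+1) - Real.log (2*Real.pi)/2)| ≤ 6 := by
    have hcl := bseq_close (k+1) (by omega)
    have hc : ((k:ℝ)+1) - 1 = (k:ℝ) := by push_cast; ring
    rw [abs_mul, abs_of_nonneg (by positivity : (0:ℝ) ≤ (k:ℝ)+1)]
    have h1 : |bseq (k+1) - Real.log (2*Real.pi)/2| ≤ 3/(k:ℝ)^2 := by
      have : ((k+1:ℕ):ℝ) - 1 = (k:ℝ) := by push_cast; ring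
      rwa [this] at hcl
    calc ((k:ℝ)+1) * |bseq (k+1) - Real.log (2*Real.pi)/2|
        ≤ ((k:ℝ)+1) * (3/(k:ℝ)^2) := mul_le_mul_of_nonneg_left h1 (by positivity)
      _ ≤ 6 := by
          have heq : ((k:ℝ)+1)*(3/(k:ℝ)^2) = (3*((k:ℝ)+1))/(k:ℝ)^2 := by ring
          rw [heq, div_le_iff₀ (by positivity)]
          nlinarith
  have hb3 : |2 * aseq (k+1)| ≤ 2*(|aseq 2| + 3) := by
    rw [abs_mul, abs_two]
    have := aseq_bound (k+1) (by omega)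
    linarith
  set c := Real.log (2*Real.pi)/2 + 1/12 - 4 * (deriv riemannZeta (-1)).re
  have habs : |(-((k:ℝ)/2 + 2/3)) * Real.log (1 + 1/(k:ℝ))
      + ((k:ℝ)+1) * (bseq (k+1) - Real.log (2*Real.pi)/2)
      - 2 * aseq (k+1) + c|
      ≤ |(-((k:ℝ)/2 + 2/3)) * Real.log (1 + 1/(k:ℝ))|
        + |((k:ℝ)+1) * (bseq (k+1) - Real.log (2*Real.pi)/2)|
        + |2 * aseq (k+1)| + |c| := by
    calc |(-((k:ℝ)/2 + 2/3)) * Real.log (1 + 1/(k:ℝ))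
        + ((k:ℝ)+1) * (bseq (k+1) - Real.log (2*Real.pi)/2)
        - 2 * aseq (k+1) + c|
        ≤ |(-((k:ℝ)/2 + 2/3)) * Real.log (1 + 1/(k:ℝ))
          + ((k:ℝ)+1) * (bseq (k+1) - Real.log (2*Real.pi)/2)
          - 2 * aseq (k+1)| + |c| := abs_add_le _ _
      _ ≤ (|(-((k:ℝ)/2 + 2/3)) * Real.log (1 + 1/(k:ℝ))
          + ((k:ℝ)+1) * (bseq (k+1) - Real.log (2*Real.pi)/2)|
          + |2 * aseq (k+1)|) + |c| := by
            have := abs_sub (-((k:ℝ)/2 + 2/3) * Real.log (1 + 1/(k:ℝ))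
              + ((k:ℝ)+1) * (bseq (k+1) - Real.log (2*Real.pi)/2)) (2 * aseq (k+1))
            linarith
      _ ≤ _ := by
            have := abs_add_le (-((k:ℝ)/2 + 2/3) * Real.log (1 + 1/(k:ℝ)))
              (((k:ℝ)+1) * (bseq (k+1) - Real.log (2*Real.pi)/2))
            linarith
  simp only [norm_one, mul_one, Real.norm_eq_abs]
  calc |(-((k:ℝ)/2 + 2/3)) * Real.log (1 + 1/(k:ℝ))
      + ((k:ℝ)+1) * (bseq (k+1) - Real.log (2*Real.pi)/2)
      - 2 * aseq (k+1) + c|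
      ≤ |(-((k:ℝ)/2 + 2/3)) * Real.log (1 + 1/(k:ℝ))|
        + |((k:ℝ)+1) * (bseq (k+1) - Real.log (2*Real.pi)/2)|
        + |2 * aseq (k+1)| + |c| := habs
    _ ≤ 1/2 + 2/3 + 6 + 2*(|aseq 2| + 3) + |c| := by linarith
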